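/- For every integer k ≥ 1, lim_{n→∞} S1(n+1, k+1)/(n!)^2 = π^{2k}/(2k+1)!, where S1 denotes the (2,1)-Stirling numbers of the first kind. -/

import Mathlib

/-- The `(l,r)`-Stirling numbers of the first kind. -/
def S1 (l r : ℕ) : ℕ → ℕ → ℕ
  | n, k =>
    if _h1 : n < r then 0
    else if _h2 : n = r then (if k = r then 1 else 0)
    else S1 l r (n - 1) (k - 1) + (n - 1) ^ l * S1 l r (n - 1) k
termination_by n _ => n
decreasing_by all_goals omega


noncomputable def Esum (n k : ℕ) : ℝ :=
  ∑ s ∈ Finset.powersetCard k (Finset.range n), ∏ j ∈ s, (1 / ((j : ℝ) + 1) ^ 2)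

lemma Esum_zero (n : ℕ) : Esum n 0 = 1 := by simp [Esum]

lemma Esum_of_lt {n k : ℕ} (h : n < k) : Esum n k = 0 := by
  rw [Esum, Finset.powersetCard_eq_empty.2 (by simpa using h), Finset.sum_empty]

lemma Esum_succ (n k : ℕ) :
    Esum (n + 1) (k + 1) = Esum n (k + 1) + 1 / ((n : ℝ) + 1) ^ 2 * Esum n k := by
  classical
  rw [Esum, Finset.range_add_one, Finset.powersetCard_succ_insert (Finset.notMem_range_self),
    Finset.sum_union, Finset.sum_image]
  · rw [Esum, Esum, Finset.mul_sum]
    congr 1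
    refine Finset.sum_congr rfl fun s hs => ?_
    have hns : n ∉ s := fun hn => Finset.notMem_range_self
      ((Finset.mem_powersetCard.1 hs).1 hn)
    rw [Finset.prod_insert hns]
  · intro s hs t ht hst
    have hns : n ∉ s := fun hn => Finset.notMem_range_self
      ((Finset.mem_powersetCard.1 hs).1 hn)
    have hnt : n ∉ t := fun hn => Finset.notMem_range_self
      ((Finset.mem_powersetCard.1 ht).1 hn)
    have := congrArg (Finset.erase · n) hst
    simpa [Finset.erase_insert hns, Finset.erase_insert hnt] using this
  · rw [Finset.disjoint_right]
    rintro s hs ht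
    obtain ⟨t, ht', rfl⟩ := Finset.mem_image.1 hs
    exact Finset.notMem_range_self ((Finset.mem_powersetCard.1 ht).1 (Finset.mem_insert_self n _))

lemma S1_succ_succ (n k : ℕ) :
    S1 2 1 (n + 2) k = S1 2 1 (n + 1) (k - 1) + (n + 1) ^ 2 * S1 2 1 (n + 1) k := by
  rw [S1]
  simp

lemma S1_one (k : ℕ) : S1 2 1 1 k = if k = 1 then 1 else 0 := by
  rw [S1]; simp

lemma S1_zero_right (n : ℕ) : S1 2 1 (n + 1) 0 = 0 := by
  induction n with
  | zero => rw [S1_one]; simp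
  | succ m ih => rw [S1_succ_succ]; simp [ih]


lemma S1_succ_succ' (n k : ℕ) :
    S1 2 1 (n + 2) (k + 1) = S1 2 1 (n + 1) k + (n + 1) ^ 2 * S1 2 1 (n + 1) (k + 1) := by
  rw [S1_succ_succ]
  norm_num

lemma S1_eq_Esum (n k : ℕ) :
    (S1 2 1 (n + 1) (k + 1) : ℝ) = (n.factorial : ℝ) ^ 2 * Esum n k := by
  induction n generalizing k with
  | zero =>
    rw [S1_one]
    rcases k with _ | k
    · simp [Esum_zero]
    · simp [Esum_of_lt (Nat.succ_pos k)]
  | succ m ih =>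
    have hm1 : ((m : ℝ) + 1) ≠ 0 := by positivity
    rw [S1_succ_succ']
    push_cast
    rcases k with _ | k
    · rw [Esum_zero]
      simp only [S1_zero_right, Nat.cast_zero, zero_add]
      have ih0 := ih 0
      norm_num at ih0
      rw [ih0, Esum_zero, Nat.factorial_succ]
      push_cast
      ring
    · rw [ih (k + 1), ih k, Esum_succ, Nat.factorial_succ]
      push_cast
      field_simp
      ring

lemma Esum_nonneg (n k : ℕ) : 0 ≤ Esum n k := by
  apply Finset.sum_nonneg; intro s _; apply Finset.prod_nonneg; intro j _; positivity

lemma Esum_mono (k : ℕ) : Monotone fun n => Esum n k := by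
  apply monotone_nat_of_le_succ
  intro n
  rcases k with _ | k
  · rw [Esum_zero, Esum_zero]
  · rw [Esum_succ]
    have := Esum_nonneg n k
    have : (0:ℝ) ≤ 1 / ((n : ℝ) + 1) ^ 2 * Esum n k := by positivity
    linarith

noncomputable def Pprod (n : ℕ) : ℝ := ∏ j ∈ Finset.range n, (1 + 1 / ((j : ℝ) + 1) ^ 2)

lemma one_le_Pprod (n : ℕ) : 1 ≤ Pprod n := by
  rw [Pprod]
  calc (1:ℝ) = ∏ _j ∈ Finset.range n, 1 := by simp
  _ ≤ ∏ j ∈ Finset.range n, (1 + 1 / ((j : ℝ) + 1) ^ 2) := by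
      apply Finset.prod_le_prod
      · intro j _; norm_num
      · intro j _
        have : (0:ℝ) ≤ 1 / ((j : ℝ) + 1) ^ 2 := by positivity
        linarith

lemma Esum_le_Pprod (n k : ℕ) : Esum n k ≤ Pprod n := by
  induction n generalizing k with
  | zero =>
    rcases k with _ | k
    · rw [Esum_zero]; exact one_le_Pprod 0
    · rw [Esum_of_lt (Nat.succ_pos k)]; linarith [one_le_Pprod 0]
  | succ m ih =>
    rcases k with _ | k
    · rw [Esum_zero]; exact one_le_Pprod _
    · rw [Esum_succ, Pprod, Finset.prod_range_succ, ← Pprod]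
      have h1 := ih (k + 1)
      have h2 := ih k
      have h3 : (0:ℝ) ≤ 1 / ((m : ℝ) + 1) ^ 2 := by positivity
      nlinarith [Esum_nonneg m k, Esum_nonneg m (k+1)]

lemma sum_inv_sq_le (n : ℕ) : ∑ j ∈ Finset.range n, 1 / ((j : ℝ) + 1) ^ 2 ≤ 2 := by
  have key : ∀ m : ℕ, ∑ j ∈ Finset.range (m + 1), 1 / ((j : ℝ) + 1) ^ 2 ≤ 2 - 1 / ((m : ℝ) + 1) := by
    intro m
    induction m with
    | zero => norm_num
    | succ p ih =>
      rw [Finset.sum_range_succ]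
      have hp : (0:ℝ) < (p : ℝ) + 1 := by positivity
      have hp2 : (0:ℝ) < (p : ℝ) + 2 := by positivity
      have hstep : 1 / ((p : ℝ) + 1 + 1) ^ 2 ≤ 1 / ((p : ℝ) + 1) - 1 / ((p : ℝ) + 1 + 1) := by
        rw [div_sub_div _ _ (by positivity) (by positivity), div_le_div_iff₀ (by positivity) (by positivity)]
        nlinarith
      push_cast
      linarith
  rcases n with _ | m
  · norm_num
  · have := key m
    have h2 : (0:ℝ) < 1 / ((m : ℝ) + 1) := by positivity
    linarith

lemma Pprod_le (n : ℕ) : Pprod n ≤ Real.exp 2 := by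
  have h1 : Pprod n ≤ ∏ j ∈ Finset.range n, Real.exp (1 / ((j : ℝ) + 1) ^ 2) := by
    apply Finset.prod_le_prod
    · intro j _; positivity
    · intro j _
      have := Real.add_one_le_exp (1 / ((j : ℝ) + 1) ^ 2)
      linarith
  rw [← Real.exp_sum] at h1
  exact h1.trans (Real.exp_le_exp.2 (sum_inv_sq_le n))

lemma Esum_le (n k : ℕ) : Esum n k ≤ Real.exp 2 := (Esum_le_Pprod n k).trans (Pprod_le n)

noncomputable def cseq (k : ℕ) : ℝ := ⨆ n, Esum n k

lemma tendsto_Esum (k : ℕ) :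
    Filter.Tendsto (fun n => Esum n k) Filter.atTop (nhds (cseq k)) :=
  tendsto_atTop_ciSup (Esum_mono k) ⟨Real.exp 2, by rintro x ⟨n, rfl⟩; exact Esum_le n k⟩

lemma cseq_le (k : ℕ) : cseq k ≤ Real.exp 2 :=
  ciSup_le fun n => Esum_le n k

lemma cseq_nonneg (k : ℕ) : 0 ≤ cseq k :=
  (Esum_nonneg 0 k).trans
    (le_ciSup (f := fun n => Esum n k) ⟨Real.exp 2, by rintro x ⟨n, rfl⟩; exact Esum_le n k⟩ 0)

open Filter Finset Real

lemma prod_eq_sum (x : ℝ) (n : ℕ) :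
    ∏ j ∈ Finset.range n, (1 + x / ((j : ℝ) + 1) ^ 2)
      = ∑ k ∈ Finset.range (n + 1), Esum n k * x ^ k := by
  classical
  have h1 : ∀ j ∈ Finset.range n,
      (1 + x / ((j:ℝ)+1)^2) = (x * (1/((j:ℝ)+1)^2) + 1) := by intros; ring
  rw [Finset.prod_congr rfl h1, Finset.prod_add]
  rw [Finset.sum_powerset]
  rw [Finset.card_range]
  refine Finset.sum_congr rfl fun k hk => ?_
  rw [Esum, Finset.sum_mul]
  refine Finset.sum_congr rfl fun s hs => ?_
  have hcard : s.card = k := (Finset.mem_powersetCard.1 hs).2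
  rw [Finset.prod_const_one, mul_one, Finset.prod_mul_distrib, Finset.prod_const, hcard,
    mul_comm]

lemma tsum_Esum (x : ℝ) (n : ℕ) :
    ∑' k : ℕ, Esum n k * x ^ k = ∏ j ∈ Finset.range n, (1 + x / ((j : ℝ) + 1) ^ 2) := by
  rw [prod_eq_sum]
  exact tsum_eq_sum fun k hk => by
    rw [Esum_of_lt (by have := Finset.mem_range.not.1 hk; omega), zero_mul]

lemma summable_cseq_mul {x : ℝ} (hx : |x| < 1) : Summable (fun k => cseq k * x ^ k) := by
  apply Summable.of_norm_bounded (g := fun k => Real.exp 2 * |x| ^ k)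
    ((summable_geometric_of_lt_one (abs_nonneg x) hx).mul_left _)
  intro k
  rw [norm_mul, Real.norm_eq_abs, Real.norm_eq_abs, abs_pow]
  exact mul_le_mul_of_nonneg_right
    (by rw [abs_of_nonneg (cseq_nonneg k)]; exact cseq_le k) (by positivity)

lemma tendsto_prod (x : ℝ) (hx : |x| ≤ 1/2) :
    Tendsto (fun n => ∏ j ∈ Finset.range n, (1 + x / ((j : ℝ) + 1) ^ 2)) atTop
      (nhds (∑' k : ℕ, cseq k * x ^ k)) := by
  have h := tendsto_tsum_of_dominated_convergence
    (f := fun (n : ℕ) (k : ℕ) => Esum n k * x ^ k) (g := fun k => cseq k * x ^ k)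
    (bound := fun k => Real.exp 2 * (1/2 : ℝ) ^ k) (𝓕 := atTop)
    ((summable_geometric_of_lt_one (by norm_num) (by norm_num)).mul_left _)
    (fun k => (tendsto_Esum k).mul_const _)
    (Filter.Eventually.of_forall fun n => ?_)
  · refine h.congr fun n => ?_
    exact tsum_Esum x n
  · intro k
    rw [norm_mul, Real.norm_eq_abs, Real.norm_eq_abs, abs_pow,
      abs_of_nonneg (Esum_nonneg n k)]
    exact mul_le_mul (Esum_le n k) (pow_le_pow_left₀ (abs_nonneg x) hx k)
      (by positivity) (Real.exp_pos 2).le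

lemma tendsto_prod_sin (y : ℝ) (hy : y ≠ 0) :
    Tendsto (fun n => ∏ j ∈ Finset.range n, (1 + (-(y^2)) / ((j : ℝ) + 1) ^ 2)) atTop
      (nhds (Real.sin (Real.pi * y) / (Real.pi * y))) := by
  have hpy : Real.pi * y ≠ 0 := mul_ne_zero Real.pi_ne_zero hy
  have h := (Real.tendsto_euler_sin_prod y).div_const (Real.pi * y)
  refine h.congr fun n => ?_
  rw [mul_comm (Real.pi * y), mul_div_assoc, div_self hpy, mul_one]
  exact Finset.prod_congr rfl fun j _ => by ring

lemma cseq_tsum_eq (y : ℝ) (hy0 : 0 < y) (hy : y ≤ 1/2) :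
    ∑' k : ℕ, cseq k * (-(y^2)) ^ k = Real.sin (Real.pi * y) / (Real.pi * y) := by
  have habs : |(-(y^2))| ≤ 1/2 := by rw [abs_neg, abs_of_nonneg (by positivity)]; nlinarith
  exact tendsto_nhds_unique (tendsto_prod _ habs) (tendsto_prod_sin y hy0.ne')

noncomputable def Tc (k : ℕ) : ℝ := Real.pi ^ (2 * k) / ((2 * k + 1).factorial : ℝ)

lemma Tc_nonneg (k : ℕ) : 0 ≤ Tc k := by unfold Tc; positivity

lemma Tc_le (k : ℕ) : Tc k ≤ Real.exp (Real.pi ^ 2) := by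
  have h1 : Tc k ≤ (Real.pi ^ 2) ^ k / (k.factorial : ℝ) := by
    unfold Tc
    rw [pow_mul]
    apply div_le_div_of_nonneg_left (by positivity) (by positivity)
    exact_mod_cast Nat.factorial_le (by omega)
  refine h1.trans ?_
  have h2 := Real.sum_le_exp_of_nonneg (x := Real.pi ^ 2) (by positivity) (k + 1)
  refine le_trans ?_ h2
  exact Finset.single_le_sum (f := fun i => (Real.pi ^ 2) ^ i / (i.factorial : ℝ))
    (fun i _ => by positivity) (Finset.self_mem_range_succ k)

lemma hasSum_sin_div (y : ℝ) (hy : y ≠ 0) :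
    HasSum (fun k : ℕ => Tc k * (-(y^2)) ^ k) (Real.sin (Real.pi * y) / (Real.pi * y)) := by
  have hpy : Real.pi * y ≠ 0 := mul_ne_zero Real.pi_ne_zero hy
  have h := (Real.hasSum_sin (Real.pi * y)).div_const (Real.pi * y)
  have heq : (fun k : ℕ => (-1:ℝ)^k * (Real.pi*y)^(2*k+1) / (((2*k+1).factorial : ℕ) : ℝ)
      / (Real.pi*y)) = fun k => Tc k * (-(y^2))^k := by
    funext k
    have h1 : (-(y^2) : ℝ)^k = (-1)^k * y^(2*k) := by rw [neg_pow, pow_mul]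
    have h2 : (Real.pi*y)^(2*k+1) = Real.pi^(2*k) * y^(2*k) * (Real.pi * y) := by
      rw [pow_succ, mul_pow]
    rw [h1, h2]
    unfold Tc
    field_simp
  rw [heq] at h
  exact h

section Extract

variable {B : ℝ}

lemma summable_aux {c : ℕ → ℝ} (hB : ∀ m, |c m| ≤ B) {u : ℝ} (h0 : 0 ≤ u) (h1 : u < 1) :
    Summable (fun m => c m * u ^ m) := by
  apply Summable.of_norm_bounded (g := fun m => B * u ^ m)
    ((summable_geometric_of_lt_one h0 h1).mul_left _)
  intro m
  rw [norm_mul, Real.norm_eq_abs, Real.norm_eq_abs, abs_pow, abs_of_nonneg h0]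
  exact mul_le_mul_of_nonneg_right (hB m) (by positivity)

lemma abs_tsum_aux {c : ℕ → ℝ} (hB : ∀ m, |c m| ≤ B) {u : ℝ} (h0 : 0 ≤ u) (h1 : u < 1/2) :
    |∑' m, c m * u ^ m| ≤ 2 * B := by
  have hB0 : 0 ≤ B := (abs_nonneg _).trans (hB 0)
  have hu1 : u < 1 := by linarith
  have hs := summable_aux hB h0 hu1
  have hsabs : Summable (fun m => |c m * u ^ m|) := hs.abs
  calc |∑' m, c m * u ^ m| ≤ ∑' m, |c m * u ^ m| := by
        have := norm_tsum_le_tsum_norm (f := fun m => c m * u ^ m)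
          (by simpa only [Real.norm_eq_abs] using hsabs)
        simpa only [Real.norm_eq_abs] using this
  _ ≤ ∑' m, B * u ^ m := by
      apply Summable.tsum_le_tsum _ hsabs ((summable_geometric_of_lt_one h0 hu1).mul_left _)
      intro m
      rw [abs_mul, abs_pow, abs_of_nonneg h0]
      exact mul_le_mul_of_nonneg_right (hB m) (by positivity)
  _ = B * (1 - u)⁻¹ := by rw [tsum_mul_left, tsum_geometric_of_lt_one h0 hu1]
  _ ≤ 2 * B := by
      have hhalf : (1:ℝ)/2 ≤ 1 - u := by linarith
      have hinv : (1 - u)⁻¹ ≤ ((1:ℝ)/2)⁻¹ := inv_anti₀ (by norm_num) hhalf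
      have hmul := mul_le_mul_of_nonneg_left hinv hB0
      norm_num at hmul
      linarith

lemma head_zero {c : ℕ → ℝ} (hB : ∀ m, |c m| ≤ B)
    (h : ∀ u : ℝ, 0 < u → u < 1/4 → ∑' m, c m * u ^ m = 0) : c 0 = 0 := by
  have hB0 : 0 ≤ B := (abs_nonneg _).trans (hB 0)
  have key : ∀ u : ℝ, 0 < u → u < 1/4 → |c 0| ≤ 2 * B * u := by
    intro u hu0 hu4
    have hu1 : u < 1 := by linarith
    have hs := summable_aux hB hu0.le hu1
    have hsplit := hs.tsum_eq_zero_add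
    rw [h u hu0 hu4] at hsplit
    have hfac : ∑' m, c (m + 1) * u ^ (m + 1) = u * ∑' m, c (m + 1) * u ^ m := by
      rw [← tsum_mul_left]
      exact tsum_congr fun m => by ring
    rw [hfac] at hsplit
    have h0 : c 0 = -(u * ∑' m, c (m + 1) * u ^ m) := by
      have := hsplit.symm
      simp only [pow_zero, mul_one] at this
      linarith
    rw [h0, abs_neg, abs_mul, abs_of_nonneg hu0.le]
    rw [mul_comm (2 * B) u]
    exact mul_le_mul_of_nonneg_left
      (abs_tsum_aux (fun m => hB (m + 1)) hu0.le (by linarith)) hu0.le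
  by_contra h0
  have hc0 : 0 < |c 0| := abs_pos.2 h0
  set u := min (|c 0| / (4 * B + 1)) (1/8) with hu
  have hu0 : 0 < u := lt_min (by positivity) (by norm_num)
  have hu4 : u < 1/4 := (min_le_right _ _).trans_lt (by norm_num)
  have h1 := key u hu0 hu4
  have h2 : u ≤ |c 0| / (4 * B + 1) := min_le_left _ _
  have h3 : 2 * B * u ≤ 2 * B * (|c 0| / (4 * B + 1)) :=
    mul_le_mul_of_nonneg_left h2 (by positivity)
  have h4 : 2 * B * (|c 0| / (4 * B + 1)) < |c 0| := by
    have he : 2 * B * (|c 0| / (4 * B + 1)) = |c 0| * (2 * B / (4 * B + 1)) := by ring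
    rw [he]
    have hlt : 2 * B / (4 * B + 1) < 1 := by
      rw [div_lt_one (by positivity)]; linarith
    exact mul_lt_of_lt_one_right hc0 hlt
  linarith

end Extract

lemma coeffs_zero {a : ℕ → ℝ} {B : ℝ} (hB : ∀ m, |a m| ≤ B)
    (h : ∀ u : ℝ, 0 < u → u < 1/4 → ∑' m, a m * u ^ m = 0) : ∀ j, a j = 0 := by
  have key : ∀ j, ∀ u : ℝ, 0 < u → u < 1/4 → ∑' m, a (m + j) * u ^ m = 0 := by
    intro j
    induction j with
    | zero => simpa using h
    | succ i ih =>
      have hi0 : a i = 0 := by simpa using head_zero (fun m => hB (m + i)) ih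
      intro u hu0 hu4
      have hu1 : u < 1 := by linarith
      have hs := summable_aux (fun m => hB (m + i)) hu0.le hu1
      have hsplit := hs.tsum_eq_zero_add
      rw [ih u hu0 hu4] at hsplit
      simp only [zero_add, pow_zero, mul_one, hi0, zero_add] at hsplit
      have hfac : ∑' m, a (m + 1 + i) * u ^ (m + 1) = u * ∑' m, a (m + (i + 1)) * u ^ m := by
        rw [← tsum_mul_left]
        exact tsum_congr fun m => by
          have : m + 1 + i = m + (i + 1) := by omega
          rw [this]; ring
      rw [hfac] at hsplit
      rcases mul_eq_zero.1 hsplit.symm with h' | h'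
      · exact absurd h' hu0.ne'
      · exact h'
  intro j
  have := head_zero (fun m => hB (m + j)) (key j)
  simpa using this

lemma cseq_eq_Tc (k : ℕ) : cseq k = Tc k := by
  set a : ℕ → ℝ := fun m => (cseq m - Tc m) * (-1) ^ m with ha
  have hB : ∀ m, |a m| ≤ Real.exp 2 + Real.exp (Real.pi ^ 2) := by
    intro m
    rw [ha]
    simp only [abs_mul, abs_pow, abs_neg, abs_one, one_pow, mul_one]
    calc |cseq m - Tc m| ≤ |cseq m| + |Tc m| := abs_sub _ _
    _ ≤ Real.exp 2 + Real.exp (Real.pi ^ 2) := by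
        rw [abs_of_nonneg (cseq_nonneg m), abs_of_nonneg (Tc_nonneg m)]
        exact add_le_add (cseq_le m) (Tc_le m)
  have h : ∀ u : ℝ, 0 < u → u < 1/4 → ∑' m, a m * u ^ m = 0 := by
    intro u hu0 hu4
    set y := Real.sqrt u with hy
    have hy0 : 0 < y := Real.sqrt_pos.2 hu0
    have hysq : y ^ 2 = u := Real.sq_sqrt hu0.le
    have hyle : y ≤ 1/2 := by
      rw [hy, show (1:ℝ)/2 = Real.sqrt (1/4) by
        rw [show (1:ℝ)/4 = (1/2)^2 by norm_num, Real.sqrt_sq (by norm_num)]]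
      exact Real.sqrt_le_sqrt (by linarith)
    have h1 := cseq_tsum_eq y hy0 hyle
    have h2 := (hasSum_sin_div y hy0.ne').tsum_eq
    rw [hysq] at h1 h2
    have hsum1 : Summable (fun m => cseq m * (-u) ^ m) := by
      apply summable_cseq_mul
      rw [abs_neg, abs_of_nonneg hu0.le]; linarith
    have hsum2 : Summable (fun m => Tc m * (-u) ^ m) := by
      have := (hasSum_sin_div y hy0.ne').summable
      rw [hysq] at this
      exact this
    have heq : (fun m => a m * u ^ m)
        = fun m => cseq m * (-u) ^ m - Tc m * (-u) ^ m := by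
      funext m
      rw [ha]
      have : (-u : ℝ) ^ m = (-1) ^ m * u ^ m := by rw [neg_pow]
      rw [this]; ring
    rw [heq, hsum1.tsum_sub hsum2, h1, h2, sub_self]
  have := coeffs_zero hB h k
  rw [ha] at this
  rcases mul_eq_zero.1 this with h' | h'
  · linarith [sub_eq_zero.1 (by linarith : cseq k - Tc k = 0)]
  · exact absurd h' (pow_ne_zero k (by norm_num))


open Filter in
theorem stmt17 (k : ℕ) (hk : 1 ≤ k) :
    Tendsto (fun n : ℕ => (S1 2 1 (n + 1) (k + 1) : ℝ) / (n.factorial : ℝ) ^ 2)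
      atTop (nhds (Real.pi ^ (2 * k) / ((2 * k + 1).factorial : ℝ))) := by
  have heq : (fun n : ℕ => (S1 2 1 (n + 1) (k + 1) : ℝ) / (n.factorial : ℝ) ^ 2)
      = fun n => Esum n k := by
    funext n
    rw [S1_eq_Esum, mul_div_cancel_left₀]
    have : (n.factorial : ℝ) ≠ 0 := Nat.cast_ne_zero.2 n.factorial_ne_zero
    positivity
  rw [heq]
  have h := tendsto_Esum k
  rwa [cseq_eq_Tc, Tc] at h
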